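/- Let α ∈ (-1,1), ρ = sqrt(1-α²), and r(x) = sqrt((x-1)²+4α²x) for x ∈ (-1,1). Then the function x ↦ log(1+x) + log(4ρ/(ρ(1-x)+r(x))) is an antiderivative of x ↦ 2ρ/((1+x)·r(x)) on (-1,1); that is, its derivative equals 2ρ/((1+x)r(x)) for every x ∈ (-1,1). -/

import Mathlib

theorem stmt_4 (α : ℝ) (hα : α ∈ Set.Ioo (-1 : ℝ) 1) (hα0 : α ≠ 0) (x : ℝ)
    (hx : x ∈ Set.Ioo (-1 : ℝ) 1) :
    HasDerivAt
      (fun y : ℝ => Real.log (1 + y) +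
        Real.log (4 * Real.sqrt (1 - α ^ 2) /
          (Real.sqrt (1 - α ^ 2) * (1 - y) + Real.sqrt ((y - 1) ^ 2 + 4 * α ^ 2 * y))))
      (2 * Real.sqrt (1 - α ^ 2) /
        ((1 + x) * Real.sqrt ((x - 1) ^ 2 + 4 * α ^ 2 * x))) x := by
  obtain ⟨ha1, ha2⟩ := hα
  obtain ⟨hx1, hx2⟩ := hx
  have hα2 : α ^ 2 < 1 := by nlinarith
  have hα2' : 0 < α ^ 2 := by positivity
  set ρ := Real.sqrt (1 - α ^ 2) with hρdef
  have hρpos : 0 < ρ := Real.sqrt_pos.2 (by nlinarith)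
  have hρ2 : ρ ^ 2 = 1 - α ^ 2 := Real.sq_sqrt (by nlinarith)
  have h1x : 0 < 1 + x := by linarith
  have hg : 0 < (x - 1) ^ 2 + 4 * α ^ 2 * x := by
    rcases le_or_gt 0 x with h | h
    · nlinarith
    · nlinarith [sq_nonneg (x + 1)]
  set r := Real.sqrt ((x - 1) ^ 2 + 4 * α ^ 2 * x) with hrdef
  have hrpos : 0 < r := Real.sqrt_pos.2 hg
  have hr2 : r ^ 2 = (x - 1) ^ 2 + 4 * α ^ 2 * x := Real.sq_sqrt hg.le
  have hDpos : 0 < ρ * (1 - x) + r := by nlinarith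
  -- derivative of inner polynomial
  have hgd : HasDerivAt (fun y : ℝ => (y - 1) ^ 2 + 4 * α ^ 2 * y)
      (2 * (x - 1) + 4 * α ^ 2) x := by
    have h1 : HasDerivAt (fun y : ℝ => (y - 1) ^ 2) (2 * (x - 1)) x := by
      have := ((hasDerivAt_id x).sub_const 1).fun_pow 2
      simpa using this
    have h2 : HasDerivAt (fun y : ℝ => 4 * α ^ 2 * y) (4 * α ^ 2) x := by
      simpa using (hasDerivAt_id x).const_mul (4 * α ^ 2)
    simpa using h1.fun_add h2
  have hrd : HasDerivAt (fun y : ℝ => Real.sqrt ((y - 1) ^ 2 + 4 * α ^ 2 * y))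
      ((2 * (x - 1) + 4 * α ^ 2) / (2 * r)) x := hgd.sqrt hg.ne'
  have hDd : HasDerivAt (fun y : ℝ => ρ * (1 - y) + Real.sqrt ((y - 1) ^ 2 + 4 * α ^ 2 * y))
      (ρ * (-1) + (2 * (x - 1) + 4 * α ^ 2) / (2 * r)) x := by
    have h3 : HasDerivAt (fun y : ℝ => ρ * (1 - y)) (ρ * (-1)) x := by
      have := ((hasDerivAt_const x (1:ℝ)).sub (hasDerivAt_id x)).const_mul ρ
      simpa using this
    exact h3.add hrd
  have hqd : HasDerivAt (fun y : ℝ => 4 * ρ /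
      (ρ * (1 - y) + Real.sqrt ((y - 1) ^ 2 + 4 * α ^ 2 * y)))
      ((0 * (ρ * (1 - x) + r) - 4 * ρ * (ρ * (-1) + (2 * (x - 1) + 4 * α ^ 2) / (2 * r))) /
        (ρ * (1 - x) + r) ^ 2) x :=
    (hasDerivAt_const x (4 * ρ)).div hDd hDpos.ne'
  have hqpos : 0 < 4 * ρ / (ρ * (1 - x) + r) := by positivity
  have hlq := hqd.log hqpos.ne'
  have hl1 : HasDerivAt (fun y : ℝ => Real.log (1 + y)) (1 / (1 + x)) x := by
    have := ((hasDerivAt_const x (1:ℝ)).add (hasDerivAt_id x)).log h1x.ne'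
    simpa using this
  have := hl1.fun_add hlq
  convert this using 1
  · rfl
  · rfl
  rw [← hrdef]
  have key : 2*ρ*r + r^2 + 1 - x^2 - 2*α^2 - 2*α^2*x = 2*ρ*(ρ*(1-x)+r) := by
    linear_combination hr2 + (2*x - 2) * hρ2
  field_simp
  linear_combination (-8*ρ) * key
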